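/- In the Lie algebra L(g, Γ) presented by generators a_i^s, b_i^s with relations (21)-(26) of the paper (in particular: C_{ij} := [a_i^s, b_j^s] = [a_j^t, b_t^i] for all s,t; [a_i^s, b_j^t] = 0 for s ≠ t; [a_i^s, a_j^t] = [b_i^s, b_j^t] = 0 for i ≠ j; Σ_j C_{ij} = Σ_s [b_i^s, a_i^s]; [a_k^s, C_{ij}] = [b_k^s, C_{ij}] = 0 for k ≠ i,j), the relation [a_i^s + a_j^s, C_{ij}] = 0 holds for all i ≠ j and all s. -/

import Mathlib

/-- In the Lie algebra L(g,Γ) presented by generators a_i^s, b_i^s and relations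
(21)-(26) of Berceanu–Măcinic–Papadima–Popescu, the relation [a_i^s + a_j^s, C_{ij}] = 0 holds for all i ≠ j and all s. -/
lemma my_lie_sum {L : Type*} [LieRing L] {ι : Type*} (x : L) (t : Finset ι)
    (f : ι → L) : ⁅x, ∑ k ∈ t, f k⁆ = ∑ k ∈ t, ⁅x, f k⁆ := by
  classical
  induction t using Finset.induction with
  | empty => simp
  | insert _ _ h ih => simp [Finset.sum_insert h, lie_add, ih]

theorem stmt_7 {V : Type*} [Fintype V] [DecidableEq V] {L : Type*}
    [LieRing L] [LieAlgebra ℚ L]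
    (E : V → V → Prop) (g : ℕ) (hg : 1 ≤ g)
    (a b : V → Fin g → L) (C : V → V → L)
    (h21 : ∀ i j, i ≠ j → ∀ s : Fin g, C i j = ⁅a i s, b j s⁆ ∧ C i j = ⁅a j s, b i s⁆)
    (h22 : ∀ i j, ¬ E i j → C i j = 0)
    (h23 : ∀ i j, i ≠ j → ∀ s t : Fin g, s ≠ t → ⁅a i s, b j t⁆ = 0)
    (h24 : ∀ i j, i ≠ j → ∀ s t : Fin g, ⁅a i s, a j t⁆ = 0 ∧ ⁅b i s, b j t⁆ = 0)
    (h25 : ∀ i, ∑ j ∈ Finset.univ.erase i, C i j = ∑ s : Fin g, ⁅b i s, a i s⁆)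
    (h26 : ∀ i j k, i ≠ j → k ≠ i → k ≠ j → ∀ s : Fin g,
      ⁅a k s, C i j⁆ = 0 ∧ ⁅b k s, C i j⁆ = 0)
    (i j : V) (hij : i ≠ j) (s : Fin g) :
    ⁅a i s + a j s, C i j⁆ = 0 := by
  -- Step 1: [a_i^s, C_ij] = [a_j^s, [a_i^s, b_i^s]]
  have step1 : ⁅a i s, C i j⁆ = ⁅a j s, ⁅a i s, b i s⁆⁆ := by
    rw [(h21 i j hij s).2, leibniz_lie, (h24 i j hij s s).1, zero_lie, zero_add]
  -- Step 2: [a_j^s, Σ_t [b_i^t, a_i^t]] = [a_j^s, [b_i^s, a_i^s]]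
  have step2 : ⁅a j s, ∑ t : Fin g, ⁅b i t, a i t⁆⁆ = ⁅a j s, ⁅b i s, a i s⁆⁆ := by
    rw [my_lie_sum]
    rw [Finset.sum_eq_single s]
    · intro t _ hts
      rw [leibniz_lie, (h24 j i hij.symm s t).1, lie_zero, add_zero,
        h23 j i hij.symm s t (Ne.symm hts), zero_lie]
    · intro h; exact absurd (Finset.mem_univ s) h
  -- Step 3: [a_j^s, Σ_k C_ik] = [a_j^s, C_ij]
  have step3 : ⁅a j s, ∑ k ∈ Finset.univ.erase i, C i k⁆ = ⁅a j s, C i j⁆ := by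
    rw [my_lie_sum]
    rw [Finset.sum_eq_single j]
    · intro k hk hkj
      have hki : k ≠ i := (Finset.mem_erase.mp hk).1
      exact (h26 i k j hki.symm hij.symm (Ne.symm hkj) s).1
    · intro h
      exact absurd (Finset.mem_erase.mpr ⟨hij.symm, Finset.mem_univ j⟩) h
  have key : ⁅a i s, C i j⁆ = -⁅a j s, C i j⁆ := by
    rw [step1]
    have : ⁅a i s, b i s⁆ = -⁅b i s, a i s⁆ := (lie_skew _ _).symm
    rw [this, lie_neg, ← step2, ← h25 i, step3]
  rw [add_lie, key, neg_add_cancel]
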